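/- Fix λ > 0, μ > 0 and c₁ ∈ (0,1), and define q : Z_+^2 → R_+ by q(i,j) = (Γ(1+1/c₁+λ+μ)/(c₁ Γ(λ+1) Γ(μ))) · (Γ(i+λ+1)/Γ(i+1)) · (Γ(j+μ)/Γ(j+1)) / (Γ(i+j+1/c₁+λ+μ+2)/Γ(i+j+1)). Then for all x, y > 0, lim_{n→∞} q(⌊n x⌋, ⌊n y⌋) / n^{-(2+1/c₁)} = (Γ(1+1/c₁+λ+μ)/(c₁ Γ(λ+1) Γ(μ))) · x^λ y^{μ-1} / (x+y)^{1+λ+μ+1/c₁}. -/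

import Mathlib

open Real Filter Topology


lemma wendel_upper {s x : ℝ} (hs0 : 0 < s) (hs1 : s < 1) (hx : 0 < x) :
    Gamma (x + s) ≤ Gamma x * x ^ s := by
  have h := Real.Gamma_mul_add_mul_le_rpow_Gamma_mul_rpow_Gamma hx
    (by linarith : (0:ℝ) < x + 1) (by linarith : (0:ℝ) < 1 - s) hs0 (by ring)
  rw [show (1 - s) * x + s * (x + 1) = x + s by ring] at h
  have hG := Real.Gamma_pos_of_pos hx
  have h1 : Gamma (x + 1) ^ s = x ^ s * Gamma x ^ s := by
    rw [Real.Gamma_add_one hx.ne', Real.mul_rpow hx.le hG.le]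
  have h2 : Gamma x ^ (1 - s) * Gamma x ^ s = Gamma x := by
    rw [← Real.rpow_add hG]; norm_num
  calc Gamma (x + s) ≤ Gamma x ^ (1 - s) * Gamma (x + 1) ^ s := h
    _ = Gamma x ^ (1 - s) * Gamma x ^ s * x ^ s := by rw [h1]; ring
    _ = Gamma x * x ^ s := by rw [h2]

lemma wendel_lower {s x : ℝ} (hs0 : 0 < s) (hs1 : s < 1) (hx : 0 < x) :
    Gamma x * x ≤ Gamma (x + s) * (x + s) ^ (1 - s) := by
  have hxs : (0:ℝ) < x + s := by linarith
  have h := Real.Gamma_mul_add_mul_le_rpow_Gamma_mul_rpow_Gamma hxs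
    (by linarith : (0:ℝ) < x + s + 1) hs0 (by linarith : (0:ℝ) < 1 - s) (by ring)
  rw [show s * (x + s) + (1 - s) * (x + s + 1) = x + 1 by ring] at h
  have hG := Real.Gamma_pos_of_pos hxs
  have h1 : Gamma (x + s + 1) ^ (1 - s) = (x + s) ^ (1 - s) * Gamma (x + s) ^ (1 - s) := by
    rw [Real.Gamma_add_one hxs.ne', Real.mul_rpow hxs.le hG.le]
  have h2 : Gamma (x + s) ^ s * Gamma (x + s) ^ (1 - s) = Gamma (x + s) := by
    rw [← Real.rpow_add hG]; norm_num
  calc Gamma x * x = Gamma (x + 1) := by rw [Real.Gamma_add_one hx.ne']; ring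
    _ ≤ Gamma (x + s) ^ s * Gamma (x + s + 1) ^ (1 - s) := h
    _ = Gamma (x + s) ^ s * Gamma (x + s) ^ (1 - s) * (x + s) ^ (1 - s) := by rw [h1]; ring
    _ = Gamma (x + s) * (x + s) ^ (1 - s) := by rw [h2]

lemma gamma_ratio_aux {s : ℝ} (hs0 : 0 < s) (hs1 : s < 1) :
    Tendsto (fun x : ℝ => Gamma (x + s) / (Gamma x * x ^ s)) atTop (𝓝 1) := by
  have hlow : Tendsto (fun x : ℝ => (x / (x + s)) ^ (1 - s)) atTop (𝓝 1) := by
    have h0 : Tendsto (fun x : ℝ => x / (x + s)) atTop (𝓝 1) := by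
      have h1 : Tendsto (fun x : ℝ => 1 - s / (x + s)) atTop (𝓝 (1 - 0)) :=
        tendsto_const_nhds.sub (tendsto_const_nhds.div_atTop
          (tendsto_atTop_add_const_right _ s tendsto_id))
      rw [sub_zero] at h1
      apply h1.congr'
      filter_upwards [eventually_gt_atTop 0] with x hx
      have hxs : x + s ≠ 0 := by positivity
      field_simp
      ring
    simpa using h0.rpow_const (Or.inl one_ne_zero)
  apply tendsto_of_tendsto_of_tendsto_of_le_of_le' hlow tendsto_const_nhds
  · filter_upwards [eventually_gt_atTop 0] with x hx
    have hxs : (0:ℝ) < x + s := by linarith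
    have hG := Real.Gamma_pos_of_pos hx
    rw [Real.div_rpow hx.le hxs.le,
      div_le_div_iff₀ (Real.rpow_pos_of_pos hxs _) (mul_pos hG (Real.rpow_pos_of_pos hx _))]
    have hxx : x ^ (1 - s) * x ^ s = x := by
      rw [← Real.rpow_add hx, sub_add_cancel, Real.rpow_one]
    calc x ^ (1 - s) * (Gamma x * x ^ s) = Gamma x * (x ^ (1 - s) * x ^ s) := by ring
      _ = Gamma x * x := by rw [hxx]
      _ ≤ Gamma (x + s) * (x + s) ^ (1 - s) := wendel_lower hs0 hs1 hx
  · filter_upwards [eventually_gt_atTop 0] with x hx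
    exact div_le_one (mul_pos (Real.Gamma_pos_of_pos hx) (Real.rpow_pos_of_pos hx _)) |>.mpr
      (wendel_upper hs0 hs1 hx)

lemma gamma_ratio_nat : ∀ (n : ℕ) (s : ℝ), 0 ≤ s → s ≤ n →
    Tendsto (fun x : ℝ => Gamma (x + s) / (Gamma x * x ^ s)) atTop (𝓝 1) := by
  intro n
  induction n with
  | zero =>
    intro s hs0 hsn
    have hs : s = 0 := le_antisymm (by exact_mod_cast hsn) hs0
    subst hs
    apply tendsto_const_nhds.congr'
    filter_upwards [eventually_gt_atTop 0] with x hx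
    rw [add_zero, Real.rpow_zero, mul_one, div_self (Real.Gamma_pos_of_pos hx).ne']
  | succ n ih =>
    intro s hs0 hsn
    rcases lt_trichotomy s 1 with h1 | h1 | h1
    · rcases eq_or_lt_of_le hs0 with h0 | h0
      · rw [← h0]
        apply tendsto_const_nhds.congr'
        filter_upwards [eventually_gt_atTop 0] with x hx
        rw [add_zero, Real.rpow_zero, mul_one, div_self (Real.Gamma_pos_of_pos hx).ne']
      · exact gamma_ratio_aux h0 h1
    · subst h1
      apply tendsto_const_nhds.congr'
      filter_upwards [eventually_gt_atTop 0] with x hx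
      rw [Real.Gamma_add_one hx.ne', Real.rpow_one, mul_comm (Gamma x) x,
        div_self (by positivity : x * Gamma x ≠ 0)]
    · have hsn' : s - 1 ≤ n := by push_cast at hsn; linarith
      have ihs := ih (s - 1) (by linarith) hsn'
      have h2 : Tendsto (fun x : ℝ => (x + (s - 1)) / x) atTop (𝓝 1) := by
        have h3 : Tendsto (fun x : ℝ => 1 + (s - 1) / x) atTop (𝓝 (1 + 0)) :=
          tendsto_const_nhds.add (tendsto_const_nhds.div_atTop tendsto_id)
        rw [add_zero] at h3
        apply h3.congr'
        filter_upwards [eventually_gt_atTop 0] with x hx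
        field_simp
      have := ihs.mul h2
      rw [mul_one] at this
      apply this.congr'
      filter_upwards [eventually_gt_atTop 0] with x hx
      have hG := Real.Gamma_pos_of_pos hx
      have hxs1 : (0:ℝ) < x + (s - 1) := by linarith
      have hGam : Gamma (x + s) = (x + (s - 1)) * Gamma (x + (s - 1)) := by
        rw [show x + s = x + (s - 1) + 1 by ring, Real.Gamma_add_one hxs1.ne']
      have hpow : x ^ s = x ^ (s - 1) * x := by
        rw [← Real.rpow_add_one hx.ne']; ring_nf
      rw [hGam, hpow]
      have hp := Real.rpow_pos_of_pos hx (s - 1)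
      field_simp

lemma gamma_ratio_tendsto {s : ℝ} (hs : 0 ≤ s) :
    Tendsto (fun x : ℝ => Gamma (x + s) / (Gamma x * x ^ s)) atTop (𝓝 1) :=
  gamma_ratio_nat ⌈s⌉₊ s hs (Nat.le_ceil s)

lemma main_eq (lam mu c₁ : ℝ) (hlam : 0 < lam) (hmu : 0 < mu) (hc0 : 0 < c₁)
    (i j nn : ℝ) (hi : 1 ≤ i) (hj : 1 ≤ j) (hn : 0 < nn) :
    Gamma (i + lam + 1) / Gamma (i + 1) * (Gamma (j + mu) / Gamma (j + 1)) /
      (Gamma (i + j + 1 / c₁ + lam + mu + 2) / Gamma (i + j + 1)) / nn ^ (-(2 + 1 / c₁))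
    = Gamma ((i + 1) + lam) / (Gamma (i + 1) * (i + 1) ^ lam)
        * (Gamma (j + mu) / (Gamma j * j ^ mu))
        / (Gamma ((i + j + 1) + (1 + lam + mu + 1 / c₁)) /
            (Gamma (i + j + 1) * (i + j + 1) ^ (1 + lam + mu + 1 / c₁)))
      * (((i + 1) / nn) ^ lam * (j / nn) ^ (mu - 1) /
          ((i + j + 1) / nn) ^ (1 + lam + mu + 1 / c₁)) := by
  have hi0 : (0:ℝ) < i := by linarith
  have hj0 : (0:ℝ) < j := by linarith
  have hw0 : (0:ℝ) < i + j + 1 := by linarith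
  have hb0 : (0:ℝ) < 1 + lam + mu + 1 / c₁ := by positivity
  have hG1 := Real.Gamma_pos_of_pos (show (0:ℝ) < i + 1 by linarith)
  have hG2 := Real.Gamma_pos_of_pos hj0
  have hG3 := Real.Gamma_pos_of_pos hw0
  have hA1 := Real.Gamma_pos_of_pos (show (0:ℝ) < (i + 1) + lam by linarith)
  have hA2 := Real.Gamma_pos_of_pos (show (0:ℝ) < j + mu by linarith)
  have hA3 := Real.Gamma_pos_of_pos (show (0:ℝ) < (i + j + 1) + (1 + lam + mu + 1 / c₁) by linarith)
  have hp1 := Real.rpow_pos_of_pos (show (0:ℝ) < i + 1 by linarith) lam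
  have hp2 := Real.rpow_pos_of_pos hj0 mu
  have hp3 := Real.rpow_pos_of_pos hw0 (1 + lam + mu + 1 / c₁)
  have hnl := Real.rpow_pos_of_pos hn lam
  have hnm := Real.rpow_pos_of_pos hn (mu - 1)
  have hnb := Real.rpow_pos_of_pos hn (1 + lam + mu + 1 / c₁)
  have f5 : nn ^ (-(2 + 1 / c₁)) =
      nn ^ lam * nn ^ (mu - 1) / nn ^ (1 + lam + mu + 1 / c₁) := by
    rw [← Real.rpow_add hn, ← Real.rpow_sub hn]
    congr 1; ring
  have f1 : ((i + 1) / nn) ^ lam = (i + 1) ^ lam / nn ^ lam :=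
    Real.div_rpow (by linarith) hn.le _
  have f2 : (j / nn) ^ (mu - 1) = j ^ (mu - 1) / nn ^ (mu - 1) :=
    Real.div_rpow hj0.le hn.le _
  have f3 : ((i + j + 1) / nn) ^ (1 + lam + mu + 1 / c₁) =
      (i + j + 1) ^ (1 + lam + mu + 1 / c₁) / nn ^ (1 + lam + mu + 1 / c₁) :=
    Real.div_rpow hw0.le hn.le _
  have f4 : j ^ (mu - 1) = j ^ mu / j := Real.rpow_sub_one hj0.ne' mu
  rw [show i + lam + 1 = (i + 1) + lam by ring,
      show i + j + 1 / c₁ + lam + mu + 2 = (i + j + 1) + (1 + lam + mu + 1 / c₁) by ring,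
      Real.Gamma_add_one hj0.ne', f5, f1, f2, f4, f3]
  field_simp


/-- the Gamma-ratio pmf `q(i,j)` of the standard preferential
attachment case is regularly varying:
`q(⌊n x⌋,⌊n y⌋)/n^{-(2+1/c₁)} → C x^λ y^{μ-1}/(x+y)^{1+λ+μ+1/c₁}`. -/
theorem stmt_7
    (lam mu c₁ : ℝ) (hlam : 0 < lam) (hmu : 0 < mu)
    (hc₁ : c₁ ∈ Set.Ioo (0 : ℝ) 1)
    (q : ℕ → ℕ → ℝ)
    (hq : ∀ i j : ℕ, q i j =
      (Gamma (1 + 1 / c₁ + lam + mu) / (c₁ * Gamma (lam + 1) * Gamma mu)) *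
        ((Gamma ((i : ℝ) + lam + 1) / Gamma ((i : ℝ) + 1)) *
          (Gamma ((j : ℝ) + mu) / Gamma ((j : ℝ) + 1)) /
          (Gamma ((i : ℝ) + (j : ℝ) + 1 / c₁ + lam + mu + 2) /
            Gamma ((i : ℝ) + (j : ℝ) + 1)))) :
    ∀ x y : ℝ, 0 < x → 0 < y →
      Tendsto
        (fun n : ℕ => q ⌊(n : ℝ) * x⌋₊ ⌊(n : ℝ) * y⌋₊ /
          (n : ℝ) ^ (-(2 + 1 / c₁)))
        atTop
        (𝓝 ((Gamma (1 + 1 / c₁ + lam + mu) /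
              (c₁ * Gamma (lam + 1) * Gamma mu)) *
            (x ^ lam * y ^ (mu - 1) / (x + y) ^ (1 + lam + mu + 1 / c₁)))) := by

  obtain ⟨hc0, hc1⟩ := hc₁
  intro x y hx hy
  set C : ℝ := Gamma (1 + 1 / c₁ + lam + mu) / (c₁ * Gamma (lam + 1) * Gamma mu) with hC
  set I : ℕ → ℝ := fun n => (⌊(n : ℝ) * x⌋₊ : ℝ) with hI
  set J : ℕ → ℝ := fun n => (⌊(n : ℝ) * y⌋₊ : ℝ) with hJ
  -- basic limits
  have hxf : Tendsto (fun n : ℕ => I n / n) atTop (𝓝 x) := by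
    have := (tendsto_nat_floor_mul_div_atTop hx.le).comp tendsto_natCast_atTop_atTop
    simp only [Function.comp_def] at this
    simpa [hI, mul_comm] using this
  have hyf : Tendsto (fun n : ℕ => J n / n) atTop (𝓝 y) := by
    have := (tendsto_nat_floor_mul_div_atTop hy.le).comp tendsto_natCast_atTop_atTop
    simp only [Function.comp_def] at this
    simpa [hJ, mul_comm] using this
  have h1n : Tendsto (fun n : ℕ => (1 : ℝ) / n) atTop (𝓝 0) :=
    tendsto_one_div_atTop_nhds_zero_nat
  have hu : Tendsto (fun n : ℕ => (I n + 1) / n) atTop (𝓝 x) := by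
    have h := hxf.add h1n
    rw [add_zero] at h
    exact h.congr fun n => by rw [← add_div]
  have hw : Tendsto (fun n : ℕ => (I n + J n + 1) / n) atTop (𝓝 (x + y)) := by
    have h := (hxf.add hyf).add h1n
    rw [add_zero] at h
    exact h.congr fun n => by rw [← add_div, ← add_div]
  -- atTop limits
  have hIat : Tendsto I atTop atTop := by
    have := (tendsto_natCast_atTop_atTop (R := ℝ)).comp (tendsto_nat_floor_mul_atTop (α := ℝ) x hx)
    simp only [Function.comp_def] at this
    simpa [hI, mul_comm] using this
  have hJat : Tendsto J atTop atTop := by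
    have := (tendsto_natCast_atTop_atTop (R := ℝ)).comp (tendsto_nat_floor_mul_atTop (α := ℝ) y hy)
    simp only [Function.comp_def] at this
    simpa [hJ, mul_comm] using this
  have hI1at : Tendsto (fun n => I n + 1) atTop atTop :=
    tendsto_atTop_add_const_right _ 1 hIat
  have hWat : Tendsto (fun n => I n + J n + 1) atTop atTop :=
    tendsto_atTop_add_const_right _ 1 (Tendsto.atTop_add_atTop hIat hJat)
  have hb0 : (0:ℝ) ≤ 1 + lam + mu + 1 / c₁ := by positivity
  -- Gamma-ratio limits
  have hR1 : Tendsto (fun n : ℕ => Gamma ((I n + 1) + lam) /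
      (Gamma (I n + 1) * (I n + 1) ^ lam)) atTop (𝓝 1) := by
    have := (gamma_ratio_tendsto hlam.le).comp hI1at
    simpa [Function.comp_def] using this
  have hR2 : Tendsto (fun n : ℕ => Gamma (J n + mu) /
      (Gamma (J n) * J n ^ mu)) atTop (𝓝 1) := by
    have := (gamma_ratio_tendsto hmu.le).comp hJat
    simpa [Function.comp_def] using this
  have hR3 : Tendsto (fun n : ℕ => Gamma ((I n + J n + 1) + (1 + lam + mu + 1 / c₁)) /
      (Gamma (I n + J n + 1) * (I n + J n + 1) ^ (1 + lam + mu + 1 / c₁))) atTop (𝓝 1) := by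
    have := (gamma_ratio_tendsto hb0).comp hWat
    simpa [Function.comp_def] using this
  -- power limits
  have hPu : Tendsto (fun n : ℕ => ((I n + 1) / n) ^ lam) atTop (𝓝 (x ^ lam)) :=
    hu.rpow_const (Or.inl hx.ne')
  have hPv : Tendsto (fun n : ℕ => (J n / n) ^ (mu - 1)) atTop (𝓝 (y ^ (mu - 1))) :=
    hyf.rpow_const (Or.inl hy.ne')
  have hPw : Tendsto (fun n : ℕ => ((I n + J n + 1) / n) ^ (1 + lam + mu + 1 / c₁))
      atTop (𝓝 ((x + y) ^ (1 + lam + mu + 1 / c₁))) :=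
    hw.rpow_const (Or.inl (add_pos hx hy).ne')
  have hfin : Tendsto (fun n : ℕ =>
      C * (Gamma ((I n + 1) + lam) / (Gamma (I n + 1) * (I n + 1) ^ lam)
        * (Gamma (J n + mu) / (Gamma (J n) * J n ^ mu))
        / (Gamma ((I n + J n + 1) + (1 + lam + mu + 1 / c₁)) /
            (Gamma (I n + J n + 1) * (I n + J n + 1) ^ (1 + lam + mu + 1 / c₁))))
      * (((I n + 1) / n) ^ lam * (J n / n) ^ (mu - 1) /
          ((I n + J n + 1) / n) ^ (1 + lam + mu + 1 / c₁))) atTop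
      (𝓝 (C * (1 * 1 / 1) * (x ^ lam * y ^ (mu - 1) /
          (x + y) ^ (1 + lam + mu + 1 / c₁)))) :=
    (tendsto_const_nhds.mul ((hR1.mul hR2).div hR3 one_ne_zero)).mul
      (((hPu.mul hPv).div hPw
        (Real.rpow_pos_of_pos (add_pos hx hy) _).ne'))
  simp only [one_mul, div_one, mul_one] at hfin
  apply hfin.congr'
  filter_upwards [hIat.eventually_ge_atTop 1, hJat.eventually_ge_atTop 1,
    eventually_ge_atTop 1] with n h1i h1j h1n
  have hn0 : (0:ℝ) < n := by exact_mod_cast Nat.lt_of_lt_of_le Nat.zero_lt_one h1n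
  have key := main_eq lam mu c₁ hlam hmu hc0 (I n) (J n) n h1i h1j hn0
  simp only [hI, hJ] at key ⊢
  rw [hq]
  conv_rhs => rw [mul_div_assoc, key]
  ring
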